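/- For every β with 1/2 ≤ β ≤ 1, the chain of inequalities C_β(X,W) ≤ δ_β(X,W) ≤ β·C_P(X,W) holds. -/

import Mathlib

open Filter Real

/-- Shannon entropy (base 2) of a finitely supported probability mass function. -/
noncomputable def ent {A : Type} [Fintype A] (q : A → ℝ) : ℝ :=
  - ∑ a, q a * Real.logb 2 (q a)

/-- Joint law of the first `n+1` samples of a Markov chain with initial distribution `μ`
and transition matrix `P`. -/
noncomputable def chainJoint {X : Type} (μ : X → ℝ) (P : X → X → ℝ) (n : ℕ)
    (x : Fin (n + 1) → X) : ℝ :=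
  μ (x 0) * ∏ i : Fin n, P (x i.castSucc) (x i.succ)

/-- Joint law of `(Y_1, …, Y_{n+1})`, where `Y` is the stationary process obtained by
observing the stationary Markov chain `X ~ (μ, P)` through the channel `W`. -/
noncomputable def obsJoint {X Y : Type} [Fintype X] (μ : X → ℝ) (P : X → X → ℝ)
    (W : X → Y → ℝ) (n : ℕ) (y : Fin (n + 1) → Y) : ℝ :=
  ∑ x : Fin (n + 1) → X, chainJoint μ P n x * ∏ i, W (x i) (y i)

/-- A finite stochastic matrix is irreducible and aperiodic iff it is primitive, i.e., some
power (and hence all larger powers) of it is entrywise positive. -/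
def IrreducibleAperiodic {X : Type} [Fintype X] [DecidableEq X] (P : Matrix X X ℝ) : Prop :=
  ∃ N : ℕ, ∀ n ≥ N, ∀ x x' : X, 0 < (P ^ n) x x'

section Defs

variable {X Y : Type} [Fintype X] [Fintype Y]

/-- Marginal distribution `ν` of each `Y_k`: `νᵀ = μᵀ W`. -/
noncomputable def nuDist (μ : X → ℝ) (W : X → Y → ℝ) : Y → ℝ := fun y => ∑ x, μ x * W x y

/-- Joint distribution of `(Y_1, Y_2)`. -/
noncomputable def jointYY (μ : X → ℝ) (P : X → X → ℝ) (W : X → Y → ℝ) : Y × Y → ℝ :=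
  fun p => ∑ x, ∑ x', μ x * W x p.1 * P x x' * W x' p.2

/-- Joint distribution of `(X_1, Y_2)`. -/
noncomputable def jointX1Y2 (μ : X → ℝ) (P : X → X → ℝ) (W : X → Y → ℝ) : X × Y → ℝ :=
  fun p => ∑ x', μ p.1 * P p.1 x' * W x' p.2

/-- Joint distribution of `(X_2, Y_1)`. -/
noncomputable def jointX2Y1 (μ : X → ℝ) (P : X → X → ℝ) (W : X → Y → ℝ) : X × Y → ℝ :=
  fun p => ∑ x, μ x * W x p.2 * P x p.1

/-- Joint distribution of `(X_1, X_2)`. -/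
noncomputable def jointXX (μ : X → ℝ) (P : X → X → ℝ) : X × X → ℝ :=
  fun p => μ p.1 * P p.1 p.2

/-- Joint distribution of `(X_1, Y_1)`. -/
noncomputable def jointX1Y1 (μ : X → ℝ) (W : X → Y → ℝ) : X × Y → ℝ :=
  fun p => μ p.1 * W p.1 p.2

/-- Joint distribution of `(X_2, Y_2)`. -/
noncomputable def jointX2Y2 (μ : X → ℝ) (P : X → X → ℝ) (W : X → Y → ℝ) : X × Y → ℝ :=
  fun p => ∑ x, μ x * P x p.1 * W p.1 p.2

/-- Joint distribution of `(X_1, X_2, Y_2)`. -/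
noncomputable def jointX1X2Y2 (μ : X → ℝ) (P : X → X → ℝ) (W : X → Y → ℝ) :
    X × X × Y → ℝ :=
  fun p => μ p.1 * P p.1 p.2.1 * W p.2.1 p.2.2

/-- Joint distribution of `(X_1, X_2, Y_1)`. -/
noncomputable def jointX1X2Y1 (μ : X → ℝ) (P : X → X → ℝ) (W : X → Y → ℝ) :
    X × X × Y → ℝ :=
  fun p => μ p.1 * W p.1 p.2.2 * P p.1 p.2.1

/-- Joint distribution of `(X_1, Y_1, Y_2)`. -/
noncomputable def jointX1Y1Y2 (μ : X → ℝ) (P : X → X → ℝ) (W : X → Y → ℝ) :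
    X × Y × Y → ℝ :=
  fun p => ∑ x', μ p.1 * W p.1 p.2.1 * P p.1 x' * W x' p.2.2

/-- Conditional entropy `H(Y_2 | Y_1) = H(Y_1, Y_2) − H(Y_1)`. -/
noncomputable def HY2gY1 (μ : X → ℝ) (P : X → X → ℝ) (W : X → Y → ℝ) : ℝ :=
  ent (jointYY μ P W) - ent (nuDist μ W)

/-- Conditional entropy `H(Y_2 | X_1) = H(X_1, Y_2) − H(X_1)`. -/
noncomputable def HY2gX1 (μ : X → ℝ) (P : X → X → ℝ) (W : X → Y → ℝ) : ℝ :=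
  ent (jointX1Y2 μ P W) - ent μ

/-- Conditional entropy `H(Y_1 | X_2) = H(X_2, Y_1) − H(X_2)`. -/
noncomputable def HY1gX2 (μ : X → ℝ) (P : X → X → ℝ) (W : X → Y → ℝ) : ℝ :=
  ent (jointX2Y1 μ P W) - ent μ

/-- Mutual information `I(X_1; X_2) = H(X_1) + H(X_2) − H(X_1, X_2)` (stationary case). -/
noncomputable def IX1X2 (μ : X → ℝ) (P : X → X → ℝ) : ℝ :=
  2 * ent μ - ent (jointXX μ P)

/-- Mutual information `I(Y_1; Y_2) = H(Y_1) + H(Y_2) − H(Y_1, Y_2)` (stationary case). -/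
noncomputable def IY1Y2 (μ : X → ℝ) (P : X → X → ℝ) (W : X → Y → ℝ) : ℝ :=
  2 * ent (nuDist μ W) - ent (jointYY μ P W)

/-- The lumpability cost `C_L(X, W) = H(Y_2|Y_1) − H(Y_2|X_1)`. -/
noncomputable def CL (μ : X → ℝ) (P : X → X → ℝ) (W : X → Y → ℝ) : ℝ :=
  HY2gY1 μ P W - HY2gX1 μ P W

/-- The predictability cost `C_P(X, W) = I(X_1;X_2) − I(Y_1;Y_2)`. -/
noncomputable def CP (μ : X → ℝ) (P : X → X → ℝ) (W : X → Y → ℝ) : ℝ :=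
  IX1X2 μ P - IY1Y2 μ P W

/-- The aggregation cost `C_β(X, W) = (1−2β)·C_L(X,W) + β·C_P(X,W)`. -/
noncomputable def Cbeta (μ : X → ℝ) (P : X → X → ℝ) (W : X → Y → ℝ) (β : ℝ) : ℝ :=
  (1 - 2 * β) * CL μ P W + β * CP μ P W

/-- `δ_β(X,W) = (1−β)·(H(Y_2|Y_1) − H̄(Y)) + β·(I(X_1;X_2) − H(Y_1) + H̄(Y))`, where `hbarY`
denotes the entropy rate `H̄(Y)`. -/
noncomputable def deltaBeta (μ : X → ℝ) (P : X → X → ℝ) (W : X → Y → ℝ)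
    (hbarY β : ℝ) : ℝ :=
  (1 - β) * (HY2gY1 μ P W - hbarY) + β * (IX1X2 μ P - ent (nuDist μ W) + hbarY)

/-- Conditional mutual information
`I(X_1; X_2 | Y_2) = H(X_1,Y_2) + H(X_2,Y_2) − H(X_1,X_2,Y_2) − H(Y_2)`. -/
noncomputable def IX1X2gY2 (μ : X → ℝ) (P : X → X → ℝ) (W : X → Y → ℝ) : ℝ :=
  ent (jointX1Y2 μ P W) + ent (jointX2Y2 μ P W) - ent (jointX1X2Y2 μ P W) -
    ent (nuDist μ W)

/-- Conditional mutual information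
`I(X_2; X_1 | Y_1) = H(X_1,Y_1) + H(X_2,Y_1) − H(X_1,X_2,Y_1) − H(Y_1)`. -/
noncomputable def IX2X1gY1 (μ : X → ℝ) (P : X → X → ℝ) (W : X → Y → ℝ) : ℝ :=
  ent (jointX1Y1 μ W) + ent (jointX2Y1 μ P W) - ent (jointX1X2Y1 μ P W) -
    ent (nuDist μ W)

/-- Conditional mutual information
`I(Y_2; X_1 | Y_1) = H(X_1,Y_1) + H(Y_1,Y_2) − H(X_1,Y_1,Y_2) − H(Y_1)`. -/
noncomputable def IY2X1gY1 (μ : X → ℝ) (P : X → X → ℝ) (W : X → Y → ℝ) : ℝ :=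
  ent (jointX1Y1 μ W) + ent (jointYY μ P W) - ent (jointX1Y1Y2 μ P W) -
    ent (nuDist μ W)

/-- Mutual information `I(X_2; Y_1) = H(X_2) + H(Y_1) − H(X_2, Y_1)`. -/
noncomputable def IX2Y1 (μ : X → ℝ) (P : X → X → ℝ) (W : X → Y → ℝ) : ℝ :=
  ent μ + ent (nuDist μ W) - ent (jointX2Y1 μ P W)

/-- The deterministic channel induced by an aggregation function `g : X → Y`:
`W_{x→y} = 1` iff `y = g x`. -/
noncomputable def detW [DecidableEq Y] (g : X → Y) : X → Y → ℝ :=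
  fun x y => if g x = y then 1 else 0

/-- The row-stochastic matrix `R = P·W` for a deterministic aggregation `g`:
`R_{x→y} = ∑_{x' : g x' = y} P_{x→x'}`. -/
noncomputable def Rmat [DecidableEq Y] (P : X → X → ℝ) (g : X → Y) : X → Y → ℝ :=
  fun x y => ∑ x', if g x' = y then P x x' else 0

/-- Kullback–Leibler divergence (base 2) between two probability mass functions on `Y`. -/
noncomputable def klDiv2 (p q : Y → ℝ) : ℝ :=
  ∑ y, p y * Real.logb 2 (p y / q y)

end Defs

lemma ent_comp_equiv {A B : Type} [Fintype A] [Fintype B] (e : A ≃ B) (q : B → ℝ) :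
    ent (fun a => q (e a)) = ent q := by
  unfold ent
  congr 1
  exact Fintype.sum_equiv e _ _ (fun a => rfl)

/-- termwise bound: p * logb 2 q - p * logb 2 p ≤ (q - p) / Real.log 2 -/
lemma term_bound (p q : ℝ) (hp : 0 ≤ p) (hq : 0 ≤ q) (h : p ≠ 0 → 0 < q) :
    p * Real.logb 2 q - p * Real.logb 2 p ≤ (q - p) / Real.log 2 := by
  have hl2 : (0:ℝ) < Real.log 2 := Real.log_pos (by norm_num)
  rcases eq_or_lt_of_le hp with h0 | hp'
  · rw [← h0]
    simp
    positivity
  · have hq' : 0 < q := h (ne_of_gt hp')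
    have key : Real.log (q / p) ≤ q / p - 1 := Real.log_le_sub_one_of_pos (by positivity)
    have h2 : p * Real.log q - p * Real.log p ≤ q - p := by
      have h3 := mul_le_mul_of_nonneg_left key hp
      rw [Real.log_div (ne_of_gt hq') (ne_of_gt hp')] at h3
      calc p * Real.log q - p * Real.log p = p * (Real.log q - Real.log p) := by ring
        _ ≤ p * (q / p - 1) := h3
        _ = q - p := by field_simp
    rw [Real.logb, Real.logb]
    calc p * (Real.log q / Real.log 2) - p * (Real.log p / Real.log 2)
        = (p * Real.log q - p * Real.log p) / Real.log 2 := by ring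
      _ ≤ (q - p) / Real.log 2 := by
          gcongr

lemma sum3 {A B C M : Type*} [Fintype A] [Fintype B] [Fintype C] [AddCommMonoid M]
    (f : A × B × C → M) : ∑ z, f z = ∑ a, ∑ b, ∑ c, f (a, b, c) := by
  rw [Fintype.sum_prod_type]
  exact Finset.sum_congr rfl fun a _ => Fintype.sum_prod_type _

lemma sum3' {A B C M : Type*} [Fintype A] [Fintype B] [Fintype C] [AddCommMonoid M]
    (f : A × B × C → M) : ∑ z, f z = ∑ c, ∑ a, ∑ b, f (a, b, c) := by
  rw [sum3]
  rw [show (∑ a : A, ∑ b : B, ∑ c : C, f (a,b,c)) = ∑ a : A, ∑ c : C, ∑ b : B, f (a,b,c) from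
    Finset.sum_congr rfl fun _ _ => Finset.sum_comm]
  exact Finset.sum_comm

lemma ent_submod {A B C : Type} [Fintype A] [Fintype B] [Fintype C]
    (p : A × B × C → ℝ) (hp : ∀ z, 0 ≤ p z) :
    ent p + ent (fun c => ∑ a, ∑ b, p (a, b, c)) ≤
    ent (fun ac : A × C => ∑ b, p (ac.1, b, ac.2)) +
    ent (fun bc : B × C => ∑ a, p (a, bc.1, bc.2)) := by
  classical
  set pC : C → ℝ := fun c => ∑ a, ∑ b, p (a, b, c) with hpC
  set pAC : A → C → ℝ := fun a c => ∑ b, p (a, b, c) with hpAC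
  set pBC : B → C → ℝ := fun b c => ∑ a, p (a, b, c) with hpBC
  set q : A × B × C → ℝ := fun z => pAC z.1 z.2.2 * pBC z.2.1 z.2.2 / pC z.2.2 with hq
  have hpC0 : ∀ c, 0 ≤ pC c := fun c => Finset.sum_nonneg fun a _ =>
    Finset.sum_nonneg fun b _ => hp _
  have hpAC0 : ∀ a c, 0 ≤ pAC a c := fun a c => Finset.sum_nonneg fun b _ => hp _
  have hpBC0 : ∀ b c, 0 ≤ pBC b c := fun b c => Finset.sum_nonneg fun a _ => hp _
  have hq0 : ∀ z, 0 ≤ q z := fun z => div_nonneg (mul_nonneg (hpAC0 _ _) (hpBC0 _ _)) (hpC0 _)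
  have hle1 : ∀ a b c, p (a, b, c) ≤ pAC a c := fun a b c =>
    Finset.single_le_sum (fun b' _ => hp (a, b', c)) (Finset.mem_univ b)
  have hle2 : ∀ a b c, p (a, b, c) ≤ pBC b c := fun a b c =>
    Finset.single_le_sum (fun a' _ => hp (a', b, c)) (Finset.mem_univ a)
  have hle3 : ∀ a c, pAC a c ≤ pC c := fun a c =>
    Finset.single_le_sum (f := fun a' => pAC a' c) (fun a' _ => hpAC0 a' c) (Finset.mem_univ a)
  have hle4 : ∀ b c, pBC b c ≤ pC c := by
    intro b c
    have : pC c = ∑ b' : B, pBC b' c := Finset.sum_comm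
    rw [this]
    exact Finset.single_le_sum (f := fun b' => pBC b' c) (fun b' _ => hpBC0 b' c)
      (Finset.mem_univ b)
  -- rewrite marginal entropies as sums over A × B × C
  have eC : ent pC = - ∑ z : A × B × C, p z * Real.logb 2 (pC z.2.2) := by
    unfold ent
    congr 1
    rw [sum3' (fun z => p z * Real.logb 2 (pC z.2.2))]
    refine Finset.sum_congr rfl fun c _ => ?_
    rw [hpC]
    simp only [Finset.sum_mul]
  have eAC : ent (fun ac : A × C => ∑ b, p (ac.1, b, ac.2)) =
      - ∑ z : A × B × C, p z * Real.logb 2 (pAC z.1 z.2.2) := by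
    unfold ent
    congr 1
    rw [show (∑ z : A × B × C, p z * Real.logb 2 (pAC z.1 z.2.2)) =
        ∑ a, ∑ b, ∑ c, p (a,b,c) * Real.logb 2 (pAC a c) from sum3 _]
    rw [Fintype.sum_prod_type]
    refine Finset.sum_congr rfl fun a _ => ?_
    rw [show (∑ b : B, ∑ c : C, p (a,b,c) * Real.logb 2 (pAC a c)) =
        ∑ c, ∑ b, p (a,b,c) * Real.logb 2 (pAC a c) from Finset.sum_comm]
    refine Finset.sum_congr rfl fun c _ => ?_
    simp only [Finset.sum_mul]
    rfl
  have eBC : ent (fun bc : B × C => ∑ a, p (a, bc.1, bc.2)) =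
      - ∑ z : A × B × C, p z * Real.logb 2 (pBC z.2.1 z.2.2) := by
    unfold ent
    congr 1
    rw [show (∑ z : A × B × C, p z * Real.logb 2 (pBC z.2.1 z.2.2)) =
        ∑ c, ∑ a, ∑ b, p (a,b,c) * Real.logb 2 (pBC b c) from sum3' _]
    rw [Fintype.sum_prod_type]
    rw [show (∑ c : C, ∑ a : A, ∑ b : B, p (a,b,c) * Real.logb 2 (pBC b c)) =
        ∑ c, ∑ b, ∑ a, p (a,b,c) * Real.logb 2 (pBC b c) from
        Finset.sum_congr rfl fun _ _ => Finset.sum_comm]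
    rw [Finset.sum_comm]
    refine Finset.sum_congr rfl fun b _ => ?_
    refine Finset.sum_congr rfl fun c _ => ?_
    simp only [Finset.sum_mul]
    rfl
  -- termwise bound
  have hterm : ∀ z : A × B × C,
      p z * Real.logb 2 (pAC z.1 z.2.2) + p z * Real.logb 2 (pBC z.2.1 z.2.2)
        - p z * Real.logb 2 (p z) - p z * Real.logb 2 (pC z.2.2)
      ≤ (q z - p z) / Real.log 2 := by
    rintro ⟨a, b, c⟩
    rcases eq_or_lt_of_le (hp (a,b,c)) with h0 | hpz
    · rw [← h0]
      simp only [zero_mul, sub_zero, add_zero, zero_add, zero_sub, neg_zero, sub_zero]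
      have := hq0 (a,b,c)
      have hl2 : (0:ℝ) < Real.log 2 := Real.log_pos (by norm_num)
      positivity
    · have h1 : 0 < pAC a c := lt_of_lt_of_le hpz (hle1 a b c)
      have h2 : 0 < pBC b c := lt_of_lt_of_le hpz (hle2 a b c)
      have h3 : 0 < pC c := lt_of_lt_of_le h1 (hle3 a c)
      have hqz : 0 < q (a,b,c) := by
        rw [hq]; exact div_pos (mul_pos h1 h2) h3
      have hlog : Real.logb 2 (q (a,b,c)) =
          Real.logb 2 (pAC a c) + Real.logb 2 (pBC b c) - Real.logb 2 (pC c) := by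
        rw [hq]
        rw [Real.logb_div (by positivity) (ne_of_gt h3),
            Real.logb_mul (ne_of_gt h1) (ne_of_gt h2)]
      have := term_bound (p (a,b,c)) (q (a,b,c)) (le_of_lt hpz) (le_of_lt hqz)
        (fun _ => hqz)
      calc p (a,b,c) * Real.logb 2 (pAC a c) + p (a,b,c) * Real.logb 2 (pBC b c)
            - p (a,b,c) * Real.logb 2 (p (a,b,c)) - p (a,b,c) * Real.logb 2 (pC c)
          = p (a,b,c) * Real.logb 2 (q (a,b,c))
            - p (a,b,c) * Real.logb 2 (p (a,b,c)) := by rw [hlog]; ring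
        _ ≤ (q (a,b,c) - p (a,b,c)) / Real.log 2 := this
  -- sum of q equals sum of p
  have hsumq : ∑ z, q z = ∑ z, p z := by
    rw [sum3' q, sum3' p]
    refine Finset.sum_congr rfl fun c _ => ?_
    have hh : ∑ a : A, ∑ b : B, q (a, b, c) =
        (∑ a : A, pAC a c) * (∑ b : B, pBC b c) / pC c := by
      rw [Finset.sum_mul, Finset.sum_div]
      refine Finset.sum_congr rfl fun a _ => ?_
      rw [Finset.mul_sum, Finset.sum_div]
    have hA : ∑ a : A, pAC a c = pC c := rfl
    have hB : ∑ b : B, pBC b c = pC c := Finset.sum_comm.symm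
    rw [hh, hA, hB]
    rcases eq_or_lt_of_le (hpC0 c) with h0 | hpos
    · rw [← h0]; simp
    · field_simp
  -- combine
  have hsum := Finset.sum_le_sum (fun z (_ : z ∈ Finset.univ) => hterm z)
  have hrhs : ∑ z : A × B × C, (q z - p z) / Real.log 2 = 0 := by
    rw [← Finset.sum_div, Finset.sum_sub_distrib, hsumq]
    simp
  rw [hrhs] at hsum
  simp only [Finset.sum_sub_distrib, Finset.sum_add_distrib] at hsum
  rw [eC, eAC, eBC]
  unfold ent
  linarith

lemma ent_prod {U T : Type} [Fintype U] [Fintype T] (f : U → ℝ) (r : U → T → ℝ)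
    (hf : ∀ u, 0 ≤ f u) (hr : ∀ u t, 0 ≤ r u t) (hr1 : ∀ u, ∑ t, r u t = 1) :
    ent (fun w : U × T => f w.1 * r w.1 w.2) =
      ent f + ∑ u, f u * (- ∑ t, r u t * Real.logb 2 (r u t)) := by
  classical
  have key : ∀ u t, f u * r u t * Real.logb 2 (f u * r u t)
      = (f u * Real.logb 2 (f u)) * r u t + f u * (r u t * Real.logb 2 (r u t)) := by
    intro u t
    rcases eq_or_lt_of_le (hf u) with h0 | hfu
    · rw [← h0]; simp
    rcases eq_or_lt_of_le (hr u t) with h0 | hru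
    · rw [← h0]; simp
    rw [Real.logb_mul (ne_of_gt hfu) (ne_of_gt hru)]
    ring
  have step : ∀ u, ∑ t, f u * r u t * Real.logb 2 (f u * r u t)
      = f u * Real.logb 2 (f u) + f u * ∑ t, r u t * Real.logb 2 (r u t) := by
    intro u
    calc ∑ t, f u * r u t * Real.logb 2 (f u * r u t)
        = ∑ t, ((f u * Real.logb 2 (f u)) * r u t
            + f u * (r u t * Real.logb 2 (r u t))) :=
          Finset.sum_congr rfl fun t _ => key u t
      _ = (f u * Real.logb 2 (f u)) * (∑ t, r u t)
            + f u * ∑ t, (r u t * Real.logb 2 (r u t)) := by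
          rw [Finset.sum_add_distrib, ← Finset.mul_sum, ← Finset.mul_sum]
      _ = f u * Real.logb 2 (f u) + f u * ∑ t, r u t * Real.logb 2 (r u t) := by
          rw [hr1 u]; ring
  unfold ent
  rw [Fintype.sum_prod_type]
  rw [Finset.sum_congr rfl fun u _ => step u, Finset.sum_add_distrib]
  simp only [mul_neg, Finset.sum_neg_distrib]
  ring

/-- The snoc equivalence `(Fin n → Z) × Z ≃ (Fin (n+1) → Z)`. -/
def snocEquiv' {Z : Type} {n : ℕ} : ((Fin n → Z) × Z) ≃ (Fin (n + 1) → Z) where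
  toFun p := Fin.snoc p.1 p.2
  invFun g := (Fin.init g, g (Fin.last n))
  left_inv p := by
    ext
    · simp [Fin.init_snoc]
    · simp [Fin.snoc_last]
  right_inv g := Fin.snoc_init_self g

set_option linter.unusedSectionVars false

section Chain

variable {X Y : Type} [Fintype X] [Fintype Y] [DecidableEq X]
variable (μ : X → ℝ) (P : X → X → ℝ) (W : X → Y → ℝ)

/-- transition row from `X_k` to `Y_{k+1}` -/
noncomputable def rr (x : X) (a : Y) : ℝ := ∑ x', P x x' * W x' a

/-- joint law of `(Y_1, …, Y_{n+1}, X_{n+1})` -/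
noncomputable def Fj (n : ℕ) (d : Fin (n + 1) → Y) (x : X) : ℝ :=
  ∑ p : Fin (n + 1) → X,
    if p (Fin.last n) = x then chainJoint μ P n p * ∏ i, W (p i) (d i) else 0

lemma chainJoint_snoc (n : ℕ) (p : Fin (n + 1) → X) (x' : X) :
    chainJoint μ P (n + 1) (Fin.snoc p x')
      = chainJoint μ P n p * P (p (Fin.last n)) x' := by
  unfold chainJoint
  rw [Fin.prod_univ_castSucc]
  have h0 : (Fin.snoc p x' : Fin (n + 2) → X) 0 = p 0 := by
    have : ((0 : Fin (n + 1)).castSucc) = (0 : Fin (n + 2)) := rfl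
    rw [← this, Fin.snoc_castSucc]
  have h1 : ∀ j : Fin n,
      (Fin.snoc p x' : Fin (n + 2) → X) (j.castSucc.castSucc) = p j.castSucc := by
    intro j; rw [Fin.snoc_castSucc]
  have h2 : ∀ j : Fin n,
      (Fin.snoc p x' : Fin (n + 2) → X) (j.castSucc.succ) = p j.succ := by
    intro j; rw [Fin.succ_castSucc, Fin.snoc_castSucc]
  have h3 : (Fin.snoc p x' : Fin (n + 2) → X) ((Fin.last n).castSucc) = p (Fin.last n) :=
    Fin.snoc_castSucc _ _ _
  have h4 : (Fin.snoc p x' : Fin (n + 2) → X) ((Fin.last n).succ) = x' := by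
    rw [Fin.succ_last, Fin.snoc_last]
  rw [h0, h3, h4]
  rw [Finset.prod_congr rfl fun j _ => by rw [h1 j, h2 j]]
  ring

lemma prod_snoc_snoc (n : ℕ) (p : Fin (n + 1) → X) (x' : X) (d : Fin (n + 1) → Y) (a : Y) :
    ∏ i : Fin (n + 2), W ((Fin.snoc p x' : Fin (n+2) → X) i) ((Fin.snoc d a : Fin (n+2) → Y) i)
      = (∏ i : Fin (n + 1), W (p i) (d i)) * W x' a := by
  rw [Fin.prod_univ_castSucc]
  simp [Fin.snoc_castSucc, Fin.snoc_last]

lemma prod_snoc_right (n : ℕ) (p : Fin (n + 1) → X) (b : Fin n → Y) (c : Y) :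
    ∏ i : Fin (n + 1), W (p i) ((Fin.snoc b c : Fin (n+1) → Y) i)
      = (∏ i : Fin n, W (p i.castSucc) (b i)) * W (p (Fin.last n)) c := by
  rw [Fin.prod_univ_castSucc]
  simp [Fin.snoc_castSucc, Fin.snoc_last]

lemma sum_prod_W (hW1 : ∀ x, ∑ y, W x y = 1) (m : ℕ) (g : Fin m → X) :
    ∑ d : Fin m → Y, ∏ i, W (g i) (d i) = 1 := by
  rw [← Fintype.piFinset_univ, ← Finset.prod_univ_sum]
  simp [hW1]

lemma chain_marg (hinv : ∀ x', ∑ x, μ x * P x x' = μ x') (n : ℕ) (x : X) :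
    (∑ p : Fin (n + 1) → X, if p (Fin.last n) = x then chainJoint μ P n p else 0)
      = μ x := by
  induction n generalizing x with
  | zero =>
    rw [Fintype.sum_equiv (Equiv.funUnique (Fin 1) X)
      (fun p : Fin 1 → X => if p (Fin.last 0) = x then chainJoint μ P 0 p else 0)
      (fun x0 : X => if x0 = x then μ x0 else 0)
      (fun p => by simp [chainJoint])]
    rw [Finset.sum_ite_eq']
    simp
  | succ n ih =>
    calc (∑ g : Fin (n+2) → X, if g (Fin.last (n+1)) = x then chainJoint μ P (n+1) g else 0)
        = ∑ w : (Fin (n+1) → X) × X,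
            if (Fin.snoc w.1 w.2 : Fin (n+2) → X) (Fin.last (n+1)) = x
              then chainJoint μ P (n+1) (Fin.snoc w.1 w.2) else 0 :=
          (Fintype.sum_equiv snocEquiv' _ _ fun w => rfl).symm
      _ = ∑ p : Fin (n+1) → X, ∑ x' : X,
            if x' = x then chainJoint μ P n p * P (p (Fin.last n)) x' else 0 := by
          rw [Fintype.sum_prod_type]
          refine Finset.sum_congr rfl fun p _ => Finset.sum_congr rfl fun x' _ => ?_
          rw [chainJoint_snoc]
          simp only [Fin.snoc_last]
      _ = ∑ p : Fin (n+1) → X, chainJoint μ P n p * P (p (Fin.last n)) x := by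
          refine Finset.sum_congr rfl fun p _ => ?_
          rw [Finset.sum_ite_eq']
          simp
      _ = ∑ p : Fin (n+1) → X, ∑ x'' : X,
            (if p (Fin.last n) = x'' then chainJoint μ P n p else 0) * P x'' x := by
          refine Finset.sum_congr rfl fun p _ => ?_
          rw [show (∑ x'' : X,
              (if p (Fin.last n) = x'' then chainJoint μ P n p else 0) * P x'' x)
              = ∑ x'' : X,
                (if p (Fin.last n) = x'' then chainJoint μ P n p * P x'' x else 0) from
            Finset.sum_congr rfl fun x'' _ => by split_ifs <;> simp]
          rw [Finset.sum_ite_eq]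
          simp
      _ = ∑ x'' : X, (∑ p : Fin (n+1) → X,
            if p (Fin.last n) = x'' then chainJoint μ P n p else 0) * P x'' x := by
          rw [Finset.sum_comm]
          exact Finset.sum_congr rfl fun x'' _ => (Finset.sum_mul _ _ _).symm
      _ = ∑ x'' : X, μ x'' * P x'' x :=
          Finset.sum_congr rfl fun x'' _ => by rw [ih]
      _ = μ x := hinv x


variable {n : ℕ}

lemma chainJoint_nonneg (hμ0 : ∀ x, 0 ≤ μ x) (hP0 : ∀ x x', 0 ≤ P x x')
    (p : Fin (n+1) → X) : 0 ≤ chainJoint μ P n p :=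
  mul_nonneg (hμ0 _) (Finset.prod_nonneg fun _ _ => hP0 _ _)

lemma obsJoint_nonneg (hμ0 : ∀ x, 0 ≤ μ x) (hP0 : ∀ x x', 0 ≤ P x x')
    (hW0 : ∀ x y, 0 ≤ W x y) (d : Fin (n+1) → Y) : 0 ≤ obsJoint μ P W n d :=
  Finset.sum_nonneg fun p _ => mul_nonneg (chainJoint_nonneg μ P hμ0 hP0 p)
    (Finset.prod_nonneg fun _ _ => hW0 _ _)

lemma Fj_nonneg (hμ0 : ∀ x, 0 ≤ μ x) (hP0 : ∀ x x', 0 ≤ P x x')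
    (hW0 : ∀ x y, 0 ≤ W x y) (d : Fin (n+1) → Y) (x : X) : 0 ≤ Fj μ P W n d x := by
  refine Finset.sum_nonneg fun p _ => ?_
  split_ifs
  · exact mul_nonneg (chainJoint_nonneg μ P hμ0 hP0 p)
      (Finset.prod_nonneg fun _ _ => hW0 _ _)
  · exact le_refl 0

lemma rr_nonneg (hP0 : ∀ x x', 0 ≤ P x x') (hW0 : ∀ x y, 0 ≤ W x y) (x : X) (a : Y) :
    0 ≤ rr P W x a :=
  Finset.sum_nonneg fun _ _ => mul_nonneg (hP0 _ _) (hW0 _ _)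

lemma rr_sum_one (hP1 : ∀ x, ∑ x', P x x' = 1) (hW1 : ∀ x, ∑ y, W x y = 1) (x : X) :
    ∑ a, rr P W x a = 1 := by
  unfold rr
  calc ∑ a, ∑ x', P x x' * W x' a = ∑ x', ∑ a, P x x' * W x' a := Finset.sum_comm
    _ = ∑ x', P x x' := by
        refine Finset.sum_congr rfl fun x' _ => ?_
        rw [← Finset.mul_sum, hW1 x', mul_one]
    _ = 1 := hP1 x

/-- M5: marginalizing `X_{n+1}` out of `Fj` gives `obsJoint n`. -/
lemma Fj_marg_x (d : Fin (n+1) → Y) : ∑ x, Fj μ P W n d x = obsJoint μ P W n d := by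
  unfold Fj obsJoint
  rw [Finset.sum_comm]
  refine Finset.sum_congr rfl fun p _ => ?_
  rw [Finset.sum_ite_eq]
  simp

/-- M6: marginalizing all `Y`'s out of `Fj` gives `μ`. -/
lemma Fj_marg_d (hinv : ∀ x', ∑ x, μ x * P x x' = μ x') (hW1 : ∀ x, ∑ y, W x y = 1)
    (x : X) : ∑ d : Fin (n+1) → Y, Fj μ P W n d x = μ x := by
  unfold Fj
  rw [Finset.sum_comm]
  rw [Finset.sum_congr rfl fun p _ => ?_]
  · exact chain_marg μ P hinv n x
  · by_cases h : p (Fin.last n) = x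
    · simp only [h, if_true]
      rw [← Finset.mul_sum, sum_prod_W W hW1 (n+1) p, mul_one]
    · simp [h]

/-- M4: composing `Fj` with the channel row `rr` gives `obsJoint (n+1)` on snoc. -/
lemma Fj_rr (d : Fin (n+1) → Y) (a : Y) :
    ∑ x, Fj μ P W n d x * rr P W x a
      = obsJoint μ P W (n+1) (Fin.snoc d a) := by
  have hrhs : obsJoint μ P W (n+1) (Fin.snoc d a)
      = ∑ p : Fin (n+1) → X, ∑ x' : X,
          chainJoint μ P n p * P (p (Fin.last n)) x'
            * ((∏ i, W (p i) (d i)) * W x' a) := by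
    unfold obsJoint
    rw [(Fintype.sum_equiv (snocEquiv' (Z := X) (n := n + 1))
      (fun w : (Fin (n+1) → X) × X => chainJoint μ P (n+1) (Fin.snoc w.1 w.2) *
        ∏ i, W ((Fin.snoc w.1 w.2 : Fin (n+2) → X) i) ((Fin.snoc d a : Fin (n+2) → Y) i))
      (fun g : Fin (n+2) → X => chainJoint μ P (n+1) g *
        ∏ i, W (g i) ((Fin.snoc d a : Fin (n+2) → Y) i))
      fun w => rfl).symm]
    rw [Fintype.sum_prod_type]
    refine Finset.sum_congr rfl fun p _ => Finset.sum_congr rfl fun x' _ => ?_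
    rw [chainJoint_snoc, prod_snoc_snoc]
  rw [hrhs]
  unfold Fj rr
  calc ∑ x, (∑ p : Fin (n+1) → X,
        if p (Fin.last n) = x then chainJoint μ P n p * ∏ i, W (p i) (d i) else 0)
          * (∑ x', P x x' * W x' a)
      = ∑ x, ∑ p : Fin (n+1) → X,
          (if p (Fin.last n) = x then (chainJoint μ P n p * ∏ i, W (p i) (d i))
            * (∑ x', P x x' * W x' a) else 0) := by
        refine Finset.sum_congr rfl fun x _ => ?_
        rw [Finset.sum_mul]
        refine Finset.sum_congr rfl fun p _ => ?_
        split_ifs <;> simp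
    _ = ∑ p : Fin (n+1) → X, ∑ x,
          (if p (Fin.last n) = x then (chainJoint μ P n p * ∏ i, W (p i) (d i))
            * (∑ x', P x x' * W x' a) else 0) := Finset.sum_comm
    _ = ∑ p : Fin (n+1) → X, (chainJoint μ P n p * ∏ i, W (p i) (d i))
          * (∑ x', P (p (Fin.last n)) x' * W x' a) := by
        refine Finset.sum_congr rfl fun p _ => ?_
        rw [Finset.sum_ite_eq]
        simp
    _ = ∑ p : Fin (n+1) → X, ∑ x' : X,
          chainJoint μ P n p * P (p (Fin.last n)) x'
            * ((∏ i, W (p i) (d i)) * W x' a) := by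
        refine Finset.sum_congr rfl fun p _ => ?_
        rw [Finset.mul_sum]
        exact Finset.sum_congr rfl fun x' _ => by ring

/-- M7: marginalizing the first `n` observations of `Fj (snoc b c)`. -/
lemma Fj_snoc (hinv : ∀ x', ∑ x, μ x * P x x' = μ x') (hW1 : ∀ x, ∑ y, W x y = 1)
    (c : Y) (x : X) :
    ∑ b : Fin n → Y, Fj μ P W n (Fin.snoc b c) x = μ x * W x c := by
  unfold Fj
  rw [Finset.sum_comm]
  rw [Finset.sum_congr rfl fun p _ => ?_]
  · rw [show (∑ p : Fin (n+1) → X,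
        if p (Fin.last n) = x then chainJoint μ P n p * W x c else 0)
        = (∑ p : Fin (n+1) → X,
          (if p (Fin.last n) = x then chainJoint μ P n p else 0) * W x c) from
      Finset.sum_congr rfl fun p _ => by split_ifs <;> simp]
    rw [← Finset.sum_mul, chain_marg μ P hinv n x]
  · by_cases h : p (Fin.last n) = x
    · simp only [h, if_true]
      rw [Finset.sum_congr rfl fun b _ => by
        rw [prod_snoc_right W n p b c]]
      rw [Finset.sum_congr rfl fun b _ => by
        rw [show chainJoint μ P n p * ((∏ i : Fin n, W (p i.castSucc) (b i)) * W (p (Fin.last n)) c)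
          = (chainJoint μ P n p * W (p (Fin.last n)) c) * ∏ i : Fin n, W (p i.castSucc) (b i) from by ring]]
      rw [← Finset.mul_sum, sum_prod_W W hW1 n (fun i => p i.castSucc), mul_one, h]
    · simp [h]

end Chain

/-- flipped snoc equivalence -/
def eFlip {Z : Type} {m : ℕ} : Z × (Fin m → Z) ≃ (Fin (m + 1) → Z) :=
  (Equiv.prodComm _ _).trans snocEquiv'

section Main

variable {X Y : Type} [Fintype X] [Fintype Y] [DecidableEq X]
variable (μ : X → ℝ) (P : X → X → ℝ) (W : X → Y → ℝ)

lemma obs_marg_last {n : ℕ} (hP1 : ∀ x, ∑ x', P x x' = 1) (hW1 : ∀ x, ∑ y, W x y = 1)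
    (d : Fin (n+1) → Y) :
    ∑ a, obsJoint μ P W (n+1) (Fin.snoc d a) = obsJoint μ P W n d := by
  rw [Finset.sum_congr rfl fun a _ => (Fj_rr μ P W d a).symm]
  rw [Finset.sum_comm]
  rw [Finset.sum_congr rfl fun x _ => by
    rw [← Finset.mul_sum, rr_sum_one P W hP1 hW1 x, mul_one]]
  exact Fj_marg_x μ P W d

lemma obs_marg_two {n : ℕ} (hinv : ∀ x', ∑ x, μ x * P x x' = μ x')
    (hW1 : ∀ x, ∑ y, W x y = 1) (c a : Y) :
    ∑ b : Fin n → Y, obsJoint μ P W (n+1) (Fin.snoc (Fin.snoc b c) a)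
      = jointYY μ P W (c, a) := by
  rw [Finset.sum_congr rfl fun b _ => (Fj_rr μ P W (Fin.snoc b c) a).symm]
  rw [Finset.sum_comm]
  rw [Finset.sum_congr rfl fun x _ => by
    rw [← Finset.sum_mul, Fj_snoc μ P W hinv hW1 c x]]
  unfold jointYY rr
  refine Finset.sum_congr rfl fun x _ => ?_
  rw [Finset.mul_sum]
  exact Finset.sum_congr rfl fun x' _ => by ring

lemma jointYY_marg (hP1 : ∀ x, ∑ x', P x x' = 1) (hW1 : ∀ x, ∑ y, W x y = 1) (c : Y) :
    ∑ a, jointYY μ P W (c, a) = nuDist μ W c := by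
  unfold jointYY nuDist
  rw [Finset.sum_comm]
  refine Finset.sum_congr rfl fun x _ => ?_
  rw [Finset.sum_comm]
  rw [Finset.sum_congr rfl fun x' _ => by
    rw [show ∀ s : Finset Y, (∑ a ∈ s, μ x * W x c * P x x' * W x' a)
        = μ x * W x c * P x x' * ∑ a ∈ s, W x' a from fun s => by
      rw [Finset.mul_sum], hW1 x', mul_one]]
  rw [← Finset.mul_sum, hP1 x, mul_one]

/-- Step A: `H(Y_{n+2} | Y_1..Y_{n+1}) ≤ H(Y_2|Y_1)`. -/
lemma step_A (hμ0 : ∀ x, 0 ≤ μ x) (hP0 : ∀ x x', 0 ≤ P x x')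
    (hP1 : ∀ x, ∑ x', P x x' = 1) (hinv : ∀ x', ∑ x, μ x * P x x' = μ x')
    (hW0 : ∀ x y, 0 ≤ W x y) (hW1 : ∀ x, ∑ y, W x y = 1) (n : ℕ) :
    ent (obsJoint μ P W (n+1)) - ent (obsJoint μ P W n)
      ≤ ent (jointYY μ P W) - ent (nuDist μ W) := by
  set p' : Y × (Fin n → Y) × Y → ℝ :=
    fun z => obsJoint μ P W (n+1) (Fin.snoc (Fin.snoc z.2.1 z.2.2) z.1) with hp'
  have hnn : ∀ z, 0 ≤ p' z := fun z => obsJoint_nonneg μ P W hμ0 hP0 hW0 _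
  have h := ent_submod p' hnn
  have e1 : ent p' = ent (obsJoint μ P W (n+1)) := by
    have := ent_comp_equiv
      ((Equiv.prodCongr (Equiv.refl Y) (snocEquiv' (Z := Y) (n := n))).trans eFlip)
      (obsJoint μ P W (n+1))
    exact this
  have e2 : ent (fun ac : Y × Y => ∑ b, p' (ac.1, b, ac.2)) = ent (jointYY μ P W) := by
    rw [show (fun ac : Y × Y => ∑ b, p' (ac.1, b, ac.2))
        = fun ac : Y × Y => jointYY μ P W ((Equiv.prodComm Y Y) ac) from
      funext fun ac => obs_marg_two μ P W hinv hW1 ac.2 ac.1]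
    exact ent_comp_equiv (Equiv.prodComm Y Y) (jointYY μ P W)
  have e3 : ent (fun bc : (Fin n → Y) × Y => ∑ a, p' (a, bc.1, bc.2))
      = ent (obsJoint μ P W n) := by
    rw [show (fun bc : (Fin n → Y) × Y => ∑ a, p' (a, bc.1, bc.2))
        = fun bc : (Fin n → Y) × Y => obsJoint μ P W n (snocEquiv' bc) from
      funext fun bc => obs_marg_last μ P W hP1 hW1 (Fin.snoc bc.1 bc.2)]
    exact ent_comp_equiv snocEquiv' (obsJoint μ P W n)
  have e4 : ent (fun c : Y => ∑ a, ∑ b, p' (a, b, c)) = ent (nuDist μ W) := by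
    rw [show (fun c : Y => ∑ a, ∑ b, p' (a, b, c)) = nuDist μ W from
      funext fun c => by
        rw [Finset.sum_congr rfl fun a _ => obs_marg_two μ P W hinv hW1 c a]
        exact jointYY_marg μ P W hP1 hW1 c]
  rw [e1, e2, e3, e4] at h
  linarith


/-- Step B: `H(Y_2|X_1) ≤ H(Y_{n+2} | Y_1..Y_{n+1})`. -/
lemma step_B (hμ0 : ∀ x, 0 ≤ μ x) (hP0 : ∀ x x', 0 ≤ P x x')
    (hP1 : ∀ x, ∑ x', P x x' = 1) (hinv : ∀ x', ∑ x, μ x * P x x' = μ x')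
    (hW0 : ∀ x y, 0 ≤ W x y) (hW1 : ∀ x, ∑ y, W x y = 1) (n : ℕ) :
    ent (jointX1Y2 μ P W) - ent μ
      ≤ ent (obsJoint μ P W (n+1)) - ent (obsJoint μ P W n) := by
  classical
  set D := Fin (n+1) → Y with hD
  set G : D × X → ℝ := fun u => Fj μ P W n u.1 u.2 with hG
  set p : Y × X × D → ℝ := fun z => Fj μ P W n z.2.2 z.2.1 * rr P W z.2.1 z.1 with hp
  have hnn : ∀ z, 0 ≤ p z := fun z =>
    mul_nonneg (Fj_nonneg μ P W hμ0 hP0 hW0 _ _) (rr_nonneg P W hP0 hW0 _ _)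
  have h := ent_submod p hnn
  -- eRow
  set eR : X → ℝ := fun x => - ∑ a, rr P W x a * Real.logb 2 (rr P W x a) with heR
  -- ent p = ent G + ∑ x, μ x * eR x
  have eP : ent p = ent G + ∑ x, μ x * eR x := by
    have e0 : ent p = ent (fun w : (D × X) × Y => G w.1 * rr P W w.1.2 w.2) := by
      have := ent_comp_equiv
        (⟨fun z : Y × X × D => ((z.2.2, z.2.1), z.1),
          fun w => (w.2, (w.1.2, w.1.1)), fun z => rfl, fun w => rfl⟩ :
          (Y × X × D) ≃ ((D × X) × Y))
        (fun w : (D × X) × Y => G w.1 * rr P W w.1.2 w.2)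
      exact this
    rw [e0]
    rw [ent_prod G (fun u a => rr P W u.2 a) (fun u => Fj_nonneg μ P W hμ0 hP0 hW0 _ _)
      (fun u a => rr_nonneg P W hP0 hW0 _ _) (fun u => rr_sum_one P W hP1 hW1 u.2)]
    congr 1
    rw [Fintype.sum_prod_type, Finset.sum_comm]
    refine Finset.sum_congr rfl fun x _ => ?_
    show (∑ d : D, Fj μ P W n d x * eR x) = μ x * eR x
    rw [← Finset.sum_mul, Fj_marg_d μ P W hinv hW1 x]
  -- ent jointX1Y2 = ent μ + ∑ x, μ x * eR x
  have eJ : ent (jointX1Y2 μ P W) = ent μ + ∑ x, μ x * eR x := by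
    have e0 : jointX1Y2 μ P W = fun w : X × Y => μ w.1 * rr P W w.1 w.2 := by
      funext w
      unfold jointX1Y2 rr
      rw [Finset.mul_sum]
      exact Finset.sum_congr rfl fun x' _ => by ring
    rw [e0]
    exact ent_prod μ (rr P W) hμ0 (fun x a => rr_nonneg P W hP0 hW0 x a)
      (fun x => rr_sum_one P W hP1 hW1 x)
  -- marginals
  have e2 : ent (fun ac : Y × D => ∑ b, p (ac.1, b, ac.2))
      = ent (obsJoint μ P W (n+1)) := by
    rw [show (fun ac : Y × D => ∑ b, p (ac.1, b, ac.2))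
        = fun ac : Y × D => obsJoint μ P W (n+1) (eFlip ac) from
      funext fun ac => Fj_rr μ P W ac.2 ac.1]
    exact ent_comp_equiv eFlip (obsJoint μ P W (n+1))
  have e3 : ent (fun bc : X × D => ∑ a, p (a, bc.1, bc.2)) = ent G := by
    rw [show (fun bc : X × D => ∑ a, p (a, bc.1, bc.2))
        = fun bc : X × D => G ((Equiv.prodComm X D) bc) from
      funext fun bc => by
        simp only [hp, hG]
        rw [← Finset.mul_sum, rr_sum_one P W hP1 hW1 bc.1, mul_one]
        rfl]
    exact ent_comp_equiv (Equiv.prodComm X D) G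
  have e4 : ent (fun c : D => ∑ a, ∑ b, p (a, b, c)) = ent (obsJoint μ P W n) := by
    rw [show (fun c : D => ∑ a, ∑ b, p (a, b, c)) = obsJoint μ P W n from
      funext fun c => by
        rw [Finset.sum_comm]
        show (∑ x : X, ∑ a : Y, Fj μ P W n c x * rr P W x a) = obsJoint μ P W n c
        calc ∑ x : X, ∑ a : Y, Fj μ P W n c x * rr P W x a
            = ∑ x : X, Fj μ P W n c x := Finset.sum_congr rfl fun x _ => by
              rw [← Finset.mul_sum, rr_sum_one P W hP1 hW1 x, mul_one]
          _ = obsJoint μ P W n c := Fj_marg_x μ P W c]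
  rw [e2, e3, e4] at h
  linarith

end Main

/-- For every `β` with `1/2 ≤ β ≤ 1`:
`C_β(X,W) ≤ δ_β(X,W) ≤ β·C_P(X,W)`. -/
theorem delta_between_above_half
    {X Y : Type} [Fintype X] [Fintype Y] [Nonempty X] [Nonempty Y] [DecidableEq X]
    (μ : X → ℝ) (P : X → X → ℝ) (W : X → Y → ℝ)
    (hμ0 : ∀ x, 0 ≤ μ x) (hμ1 : ∑ x, μ x = 1)
    (hP0 : ∀ x x', 0 ≤ P x x') (hP1 : ∀ x, ∑ x', P x x' = 1)
    (hinv : ∀ x', ∑ x, μ x * P x x' = μ x')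
    (hirr : IrreducibleAperiodic (Matrix.of fun a b => P a b))
    (hW0 : ∀ x y, 0 ≤ W x y) (hW1 : ∀ x, ∑ y, W x y = 1)
    (hbarY : ℝ)
    (hlim : Filter.Tendsto (fun n => ent (obsJoint μ P W (n + 1)) - ent (obsJoint μ P W n))
      Filter.atTop (nhds hbarY)) :
    ∀ β : ℝ, 1 / 2 ≤ β → β ≤ 1 →
      Cbeta μ P W β ≤ deltaBeta μ P W hbarY β ∧
      deltaBeta μ P W hbarY β ≤ β * CP μ P W := by
  have hA : ∀ n : ℕ, ent (obsJoint μ P W (n+1)) - ent (obsJoint μ P W n)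
      ≤ ent (jointYY μ P W) - ent (nuDist μ W) :=
    step_A μ P W hμ0 hP0 hP1 hinv hW0 hW1
  have hB : ∀ n : ℕ, ent (jointX1Y2 μ P W) - ent μ
      ≤ ent (obsJoint μ P W (n+1)) - ent (obsJoint μ P W n) :=
    step_B μ P W hμ0 hP0 hP1 hinv hW0 hW1
  have h1 : hbarY ≤ ent (jointYY μ P W) - ent (nuDist μ W) :=
    le_of_tendsto hlim (Filter.Eventually.of_forall hA)
  have h2 : ent (jointX1Y2 μ P W) - ent μ ≤ hbarY :=
    ge_of_tendsto hlim (Filter.Eventually.of_forall hB)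
  intro β hb1 hb2
  have hb : (0:ℝ) ≤ 2 * β - 1 := by linarith
  constructor
  · have e1 : deltaBeta μ P W hbarY β - Cbeta μ P W β
        = (2 * β - 1) * (hbarY - (ent (jointX1Y2 μ P W) - ent μ)) := by
      unfold deltaBeta Cbeta CL CP HY2gY1 HY2gX1 IX1X2 IY1Y2
      ring
    have m1 : 0 ≤ (2 * β - 1) * (hbarY - (ent (jointX1Y2 μ P W) - ent μ)) :=
      mul_nonneg hb (by linarith)
    linarith
  · have e2 : β * CP μ P W - deltaBeta μ P W hbarY β
        = (2 * β - 1) * ((ent (jointYY μ P W) - ent (nuDist μ W)) - hbarY) := by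
      unfold deltaBeta CP HY2gY1 IX1X2 IY1Y2
      ring
    have m2 : 0 ≤ (2 * β - 1) * ((ent (jointYY μ P W) - ent (nuDist μ W)) - hbarY) :=
      mul_nonneg hb (by linarith)
    linarith
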